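/- Let M be a matroid with lattice of flats L and let F₁ ⊆ F₂ be flats of M. Then [rk(F₂) − rk(F₁)]_q = ∑_{F₁ ⊆ F ⊊ F₂, F ∈ L} χ̄_{M|F₂/F}(q), where χ̄ denotes the reduced characteristic polynomial. -/

import Mathlib

open Polynomial

namespace MatroidZeta

open scoped Classical

variable {α : Type*}

/-- The `q`-analogue `[n]_q = 1 + q + ⋯ + q^(n-1)` of a natural number `n`, in `ℤ[q]`. -/
noncomputable def qAnalogue (n : ℕ) : Polynomial ℤ := ∑ i ∈ Finset.range n, X ^ i

/-- The rank of a set `X` in a matroid `M`: the largest size of an independent subset of `X`. -/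
noncomputable def rk (M : Matroid α) (X : Set α) : ℕ :=
  sSup {n | ∃ I, M.Indep I ∧ I ⊆ X ∧ I.ncard = n}

/-- Contraction `M / C` of a matroid, defined as the dual of the deletion of `C`
from the dual matroid. -/
noncomputable def contract (M : Matroid α) (C : Set α) : Matroid α :=
  ((M✶.restrict (M✶.E \ C))✶)

/-- A matroid is loopless if no element of the ground set lies in the closure of `∅`. -/
def Loopless (M : Matroid α) : Prop := M.closure ∅ = ∅

/-- The characteristic polynomial `χ_M(q) = ∑_{S ⊆ E} (-1)^{#S} q^(rk M - rk S)`. -/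
noncomputable def charPoly (M : Matroid α) : Polynomial ℤ :=
  ∑ᶠ S ∈ {S : Set α | S ⊆ M.E}, (-1 : ℤ) ^ S.ncard • (X : Polynomial ℤ) ^ (rk M M.E - rk M S)

/-- The reduced characteristic polynomial
`χ̄_M(q) = χ_M(q)/(q-1) = ∑_{S ⊆ E} (-1)^{#S} [rk M - rk S]_q`. -/
noncomputable def redCharPoly (M : Matroid α) : Polynomial ℤ :=
  ∑ᶠ S ∈ {S : Set α | S ⊆ M.E}, (-1 : ℤ) ^ S.ncard • qAnalogue (rk M M.E - rk M S)

/-- `wt_M(w) = max_{B basis of M} ∑_{e ∈ B} w e`. -/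
noncomputable def wt (M : Matroid α) (w : α → ℝ) : ℝ :=
  sSup {x | ∃ B, M.IsBase B ∧ x = ∑ᶠ e ∈ B, w e}

/-- The initial matroid `M_w`: the matroid on the ground set of `M` whose bases are the
bases of `M` of maximal `w`-weight.  (Such a matroid exists and is unique.) -/
noncomputable def initialMatroid (M : Matroid α) (w : α → ℝ) : Matroid α :=
  if h : ∃ N : Matroid α, N.E = M.E ∧
      ∀ B, N.IsBase B ↔ M.IsBase B ∧ ∑ᶠ e ∈ B, w e = wt M w
  then h.choose else M

/-- A flag of non-minimal flats of `M`: a chain of flats strictly above `cl(∅)`. -/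
def IsFlag (M : Matroid α) (C : Finset (Set α)) : Prop :=
  (∀ F ∈ C, M.IsFlat F ∧ M.closure ∅ ⊂ F) ∧ IsChain (· ⊆ ·) (C : Set (Set α))

/-- `N(M)`: the set of flags of non-minimal flats of `M`. -/
def flags (M : Matroid α) : Set (Finset (Set α)) := {C | IsFlag M C}

/-- `N°(M)`: flags not containing the ground set. -/
def flagsCirc (M : Matroid α) : Set (Finset (Set α)) := {C | IsFlag M C ∧ M.E ∉ C}

/-- `N*(M)`: flags containing the ground set. -/
def flagsStar (M : Matroid α) : Set (Finset (Set α)) := {C | IsFlag M C ∧ M.E ∈ C}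

/-- `z_C(F)`: the largest member of the chain `C` strictly below `F` (or `∅` if none). -/
def zmin (C : Finset (Set α)) (F : Set α) : Set α := ⋃₀ {G | G ∈ C ∧ G ⊂ F}

/-- The weight vector `∑_{F ∈ C} v_F`, a point in the relative interior of the cone `σ_C`. -/
noncomputable def flagWeight (C : Finset (Set α)) : α → ℝ :=
  fun e => ∑ F ∈ C, if e ∈ F then (1 : ℝ) else 0

/-- The initial matroid `M_C` of a flag `C`. -/
noncomputable def flagMatroid (M : Matroid α) (C : Finset (Set α)) : Matroid α :=
  initialMatroid M (flagWeight C)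


lemma ncard_le_ncard_basis {M : Matroid α} {I J X : Set α} (hI : M.IsBasis I X)
    (hIfin : I.Finite) (hJ : M.Indep J) (hJX : J ⊆ X) : J.ncard ≤ I.ncard := by
  rcases J.finite_or_infinite with hf | hf
  · by_contra h
    push_neg at h
    have hlt : I.encard < J.encard := by
      rw [← hIfin.cast_ncard_eq, ← hf.cast_ncard_eq]
      exact_mod_cast h
    obtain ⟨e, he, hei⟩ := hI.indep.augment hJ hlt
    have := hI.eq_of_subset_indep hei (Set.subset_insert _ _)
      (Set.insert_subset (hJX he.1) hI.subset)
    exact he.2 (Set.insert_eq_self.mp this.symm)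
  · simp [hf.ncard]

lemma rk_eq_ncard_of_basis {M : Matroid α} {I X : Set α} (hI : M.IsBasis I X)
    (hIfin : I.Finite) : rk M X = I.ncard := by
  have hub : ∀ n ∈ {n | ∃ J, M.Indep J ∧ J ⊆ X ∧ J.ncard = n}, n ≤ I.ncard := by
    rintro n ⟨J, hJ, hJX, rfl⟩
    exact ncard_le_ncard_basis hI hIfin hJ hJX
  refine le_antisymm (csSup_le ⟨I.ncard, I, hI.indep, hI.subset, rfl⟩ hub)
    (le_csSup ⟨I.ncard, hub⟩ ⟨I, hI.indep, hI.subset, rfl⟩)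

lemma rk_closure_eq {M : Matroid α} {X : Set α} (hX : X ⊆ M.E) (hfin : X.Finite) :
    rk M (M.closure X) = rk M X := by
  obtain ⟨I, hI⟩ := M.exists_isBasis X hX
  have hIfin : I.Finite := hfin.subset hI.subset
  rw [rk_eq_ncard_of_basis hI hIfin, rk_eq_ncard_of_basis hI.isBasis_closure_right hIfin]

lemma rk_restrict {M : Matroid α} {R Y : Set α} (hYR : Y ⊆ R) :
    rk (M.restrict R) Y = rk M Y := by
  unfold rk
  congr 1
  ext n
  constructor
  · rintro ⟨I, hI, hIY, rfl⟩
    exact ⟨I, (Matroid.restrict_indep_iff.mp hI).1, hIY, rfl⟩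
  · rintro ⟨I, hI, hIY, rfl⟩
    exact ⟨I, Matroid.restrict_indep_iff.mpr ⟨hI, hIY.trans hYR⟩, hIY, rfl⟩

lemma rk_dual_add (M : Matroid α) (hE : M.E.Finite) {X : Set α} (hX : X ⊆ M.E) :
    rk M✶ X + rk M M.E = X.ncard + rk M (M.E \ X) := by
  obtain ⟨I, hI⟩ := M.exists_isBasis (M.E \ X) Set.diff_subset
  obtain ⟨B, hB, hIB⟩ := hI.indep.exists_isBase_superset
  have hBE : B ⊆ M.E := hB.subset_ground
  have hXfin : X.Finite := hE.subset hX
  have hBfin : B.Finite := hE.subset hBE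
  have hIfin : I.Finite := hBfin.subset hIB
  have hIeq : B ∩ (M.E \ X) = I :=
    (hI.eq_of_subset_indep (hB.indep.subset Set.inter_subset_left)
      (Set.subset_inter hIB hI.subset) Set.inter_subset_right).symm
  have h1 : rk M M.E = B.ncard := rk_eq_ncard_of_basis hB.isBasis_ground hBfin
  have h2 : rk M (M.E \ X) = I.ncard := rk_eq_ncard_of_basis hI hIfin
  -- B splits
  have hBsplitSet : (B ∩ X) ∪ I = B := by
    rw [← hIeq, ← Set.inter_union_distrib_left, Set.union_diff_cancel hX,
      Set.inter_eq_left.mpr hBE]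
  have hdisjBI : Disjoint (B ∩ X) I := by
    rw [← hIeq]
    exact Set.disjoint_sdiff_right.mono Set.inter_subset_right Set.inter_subset_right
  have hBsplit : (B ∩ X).ncard + I.ncard = B.ncard := by
    rw [← Set.ncard_union_eq hdisjBI (hBfin.subset Set.inter_subset_left) hIfin, hBsplitSet]
  -- X splits
  have hXsplit : (X \ B).ncard + (X ∩ B).ncard = X.ncard := by
    rw [← Set.ncard_union_eq Set.disjoint_sdiff_inter (hXfin.diff) (hXfin.subset Set.inter_subset_left),
      Set.diff_union_inter]
  -- upper bound for dual rank
  have hub : ∀ n ∈ {n | ∃ J, M✶.Indep J ∧ J ⊆ X ∧ J.ncard = n}, n ≤ (X \ B).ncard := by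
    rintro n ⟨J, hJ, hJX, rfl⟩
    obtain ⟨hJE, B₀, hB₀, hdisj⟩ := Matroid.dual_indep_iff_exists'.mp hJ
    have hB₀E : B₀ ⊆ M.E := hB₀.subset_ground
    have hB₀fin : B₀.Finite := hE.subset hB₀E
    have c1 : (B₀ ∩ X).ncard + (B₀ ∩ (M.E \ X)).ncard = B₀.ncard := by
      rw [← Set.ncard_union_eq
        (Set.disjoint_sdiff_right.mono Set.inter_subset_right Set.inter_subset_right)
        (hB₀fin.subset Set.inter_subset_left) (hB₀fin.subset Set.inter_subset_left),
        ← Set.inter_union_distrib_left, Set.union_diff_cancel hX, Set.inter_eq_left.mpr hB₀E]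
    have c2 : (B₀ ∩ (M.E \ X)).ncard ≤ I.ncard :=
      ncard_le_ncard_basis hI hIfin (hB₀.indep.subset Set.inter_subset_left)
        Set.inter_subset_right
    have c3 : B₀.ncard = B.ncard := hB₀.ncard_eq_ncard_of_isBase hB
    have c4 : J.ncard + (X ∩ B₀).ncard ≤ X.ncard := by
      rw [← Set.ncard_union_eq (hdisj.mono_right Set.inter_subset_right)
        (hXfin.subset hJX) (hXfin.subset Set.inter_subset_left)]
      exact Set.ncard_le_ncard (Set.union_subset hJX Set.inter_subset_left) hXfin
    have c5 : (X ∩ B₀).ncard = (B₀ ∩ X).ncard := by rw [Set.inter_comm]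
    have c6 : (X ∩ B).ncard = (B ∩ X).ncard := by rw [Set.inter_comm]
    omega
  have hmem : (X \ B).ncard ∈ {n | ∃ J, M✶.Indep J ∧ J ⊆ X ∧ J.ncard = n} :=
    ⟨X \ B, Matroid.dual_indep_iff_exists'.mpr
      ⟨Set.diff_subset.trans hX, B, hB, Set.disjoint_sdiff_left⟩, Set.diff_subset, rfl⟩
  have hdual : rk M✶ X = (X \ B).ncard :=
    le_antisymm (csSup_le ⟨_, hmem⟩ hub) (le_csSup ⟨_, hub⟩ hmem)
  have c6 : (X ∩ B).ncard = (B ∩ X).ncard := by rw [Set.inter_comm]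
  rw [hdual, h1, h2]
  omega

lemma contract_ground (M : Matroid α) (C : Set α) : (contract M C).E = M.E \ C := rfl

lemma rk_contract_add (M : Matroid α) (hE : M.E.Finite) {C X : Set α} (hC : C ⊆ M.E)
    (hX : X ⊆ M.E \ C) : rk (contract M C) X + rk M C = rk M (C ∪ X) := by
  have hDE : M.E \ C ⊆ M.E := Set.diff_subset
  have hXE : X ⊆ M.E := hX.trans hDE
  have hcon : contract M C = (M✶.restrict (M.E \ C))✶ := rfl
  have hM'E : (M✶.restrict (M.E \ C)).E = M.E \ C := rfl
  have e1 := rk_dual_add (M✶.restrict (M.E \ C)) (by rw [hM'E]; exact hE.subset hDE)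
    (X := X) (by rw [hM'E]; exact hX)
  rw [hM'E] at e1
  have r1 : rk (M✶.restrict (M.E \ C)) (M.E \ C) = rk M✶ (M.E \ C) :=
    rk_restrict (subset_refl _)
  have r2 : rk (M✶.restrict (M.E \ C)) ((M.E \ C) \ X) = rk M✶ ((M.E \ C) \ X) :=
    rk_restrict Set.diff_subset
  have e2 := rk_dual_add M hE hDE
  rw [Set.diff_diff_cancel_left hC] at e2
  have e3 := rk_dual_add M hE (X := (M.E \ C) \ X) (Set.diff_subset.trans hDE)
  have hset : M.E \ ((M.E \ C) \ X) = C ∪ X := by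
    rw [Set.diff_diff_right, Set.diff_diff_cancel_left hC, Set.inter_eq_right.mpr hXE]
  rw [hset] at e3
  have hcard : X.ncard + ((M.E \ C) \ X).ncard = (M.E \ C).ncard := by
    rw [← Set.ncard_union_eq Set.disjoint_sdiff_right (hE.subset hXE)
      ((hE.subset hDE).diff), Set.union_diff_cancel hX]
  rw [r1, r2] at e1
  rw [hcon]
  omega

lemma finsum_mem_subsets {β : Type*} [AddCommMonoid β] {Dset : Set α} (hD : Dset.Finite)
    (f : Set α → β) :
    ∑ᶠ S ∈ {S : Set α | S ⊆ Dset}, f S = ∑ S ∈ hD.toFinset.powerset, f ↑S := by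
  rw [finsum_mem_eq_finite_toFinset_sum _ hD.finite_subsets]
  refine Finset.sum_bij' (fun S hS => (hD.subset (by simpa using hS)).toFinset)
    (fun S _ => (↑S : Set α)) (fun S hS => ?_) (fun S hS => ?_) (fun S hS => by simp)
    (fun S hS => by ext x; simp) (fun S hS => by simp)
  · simp only [Finset.mem_powerset]
    intro x hx
    simp only [Set.Finite.mem_toFinset] at hx ⊢
    exact (by simpa using hS : S ⊆ Dset) hx
  · simp only [Set.Finite.mem_toFinset]
    simpa using (Finset.mem_powerset.mp hS : _)

lemma qAnalogue_zero : qAnalogue 0 = 0 := by simp [qAnalogue]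

lemma redCharPoly_contract_eq (M : Matroid α) (hE : M.E.Finite) {F₂ F : Set α}
    (h₂E : F₂ ⊆ M.E) (hFF₂ : F ⊆ F₂) (hD : (F₂ \ F).Finite) :
    redCharPoly (contract (M.restrict F₂) F) =
      ∑ S ∈ hD.toFinset.powerset,
        (-1 : ℤ) ^ S.card • qAnalogue (rk M F₂ - rk M (M.closure (F ∪ ↑S))) := by
  have hF₂fin : F₂.Finite := hE.subset h₂E
  set N := contract (M.restrict F₂) F with hN
  have expand : redCharPoly N = ∑ᶠ S ∈ {S : Set α | S ⊆ F₂ \ F},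
      ((-1 : ℤ) ^ S.ncard • qAnalogue (rk N (F₂ \ F) - rk N S)) := rfl
  rw [expand, finsum_mem_subsets hD]
  refine Finset.sum_congr rfl fun S hS => ?_
  have hSsub : (↑S : Set α) ⊆ F₂ \ F := by
    intro x hx
    have := Finset.mem_powerset.mp hS hx
    simpa using this
  have hMrE : (M.restrict F₂).E = F₂ := rfl
  have h1 := rk_contract_add (M.restrict F₂) (by rw [hMrE]; exact hF₂fin) (C := F)
    (X := (↑S : Set α)) (by rw [hMrE]; exact hFF₂) (by rw [hMrE]; exact hSsub)
  have h2 := rk_contract_add (M.restrict F₂) (by rw [hMrE]; exact hF₂fin) (C := F)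
    (X := F₂ \ F) (by rw [hMrE]; exact hFF₂) (by rw [hMrE])
  have hSF₂ : (↑S : Set α) ⊆ F₂ := hSsub.trans Set.diff_subset
  have hrF : rk (M.restrict F₂) F = rk M F := rk_restrict hFF₂
  have hrFS : rk (M.restrict F₂) (F ∪ ↑S) = rk M (F ∪ ↑S) :=
    rk_restrict (Set.union_subset hFF₂ hSF₂)
  have hrF₂ : rk (M.restrict F₂) (F ∪ (F₂ \ F)) = rk M F₂ := by
    rw [Set.union_diff_cancel hFF₂]; exact rk_restrict (subset_refl _)
  have hcl : rk M (M.closure (F ∪ ↑S)) = rk M (F ∪ ↑S) :=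
    rk_closure_eq (Set.union_subset (hFF₂.trans h₂E) (hSF₂.trans h₂E))
      ((hF₂fin.subset hFF₂).union (hF₂fin.subset hSF₂))
  rw [hrF, hrFS, ← hN] at h1
  rw [hrF, hrF₂, ← hN] at h2
  rw [Set.ncard_coe_finset, hcl]
  congr 2
  omega

/-- Möbius-like coefficient: signed count of subsets of `F₂ \ F` whose union with `F`
has closure `G`. -/
noncomputable def mob (M : Matroid α) {F₂ : Set α} (hF₂fin : F₂.Finite) (F G : Set α) : ℤ :=
  ∑ S ∈ ((hF₂fin.diff (t := F)).toFinset).powerset.filter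
      (fun (S : Finset α) => M.closure (F ∪ ↑S) = G), (-1 : ℤ) ^ S.card

lemma closure_flat' (M : Matroid α) (X : Set α) : M.IsFlat (M.closure X) := by
  rw [Matroid.closure_def]
  have hne : {F | M.IsFlat F ∧ X ∩ M.E ⊆ F}.Nonempty := ⟨M.E, M.ground_isFlat, Set.inter_subset_right⟩
  have := hne.coe_sort
  rw [Set.sInter_eq_iInter]
  exact Matroid.IsFlat.iInter fun F => F.2.1

lemma lemA (M : Matroid α) {F₁ F₂ : Set α} (h₂ : M.IsFlat F₂) (hF₂fin : F₂.Finite)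
    (𝓐 : Finset (Set α))
    (h𝓐 : ∀ G : Set α, G ∈ 𝓐 ↔ M.IsFlat G ∧ F₁ ⊆ G ∧ G ⊆ F₂)
    {F H : Set α} (hF : F ∈ 𝓐) (hH : H ∈ 𝓐) (hFH : F ⊆ H) :
    ∑ G ∈ 𝓐.filter (fun G => F ⊆ G ∧ G ⊆ H), mob M hF₂fin F G
      = if F = H then 1 else 0 := by
  classical
  obtain ⟨hHflat, hF₁H, hHF₂⟩ := (h𝓐 H).mp hH
  obtain ⟨hFflat, hF₁F, hFF₂⟩ := (h𝓐 F).mp hF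
  set DF : Finset α := (hF₂fin.diff (t := F)).toFinset with hDF
  have hmemDF : ∀ {x}, x ∈ DF ↔ x ∈ F₂ ∧ x ∉ F := by intro x; simp [hDF]
  set s : Finset (Finset α) := DF.powerset.filter (fun S => (↑S : Set α) ⊆ H) with hs
  have hclsub : ∀ {S : Finset α}, S ∈ DF.powerset →
      (↑S : Set α) ⊆ M.closure (F ∪ ↑S) ∧ F ⊆ M.closure (F ∪ ↑S) := by
    intro S hS
    have hSF₂ : (↑S : Set α) ⊆ F₂ := fun x hx =>
      (hmemDF.mp (Finset.mem_powerset.mp hS hx)).1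
    have h1 : (F ∪ ↑S) ⊆ M.E :=
      Set.union_subset (hFF₂.trans h₂.subset_ground) (hSF₂.trans h₂.subset_ground)
    have h2 := M.subset_closure (F ∪ ↑S) h1
    exact ⟨Set.subset_union_right.trans h2, Set.subset_union_left.trans h2⟩
  have hmaps : ∀ S ∈ s, M.closure (F ∪ ↑S) ∈ 𝓐.filter (fun G => F ⊆ G ∧ G ⊆ H) := by
    intro S hS'
    obtain ⟨hSpw, hSH⟩ := Finset.mem_filter.mp hS'
    have hclH : M.closure (F ∪ ↑S) ⊆ H := by
      have := M.closure_subset_closure (Set.union_subset hFH hSH)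
      rwa [hHflat.closure] at this
    exact Finset.mem_filter.mpr ⟨(h𝓐 _).mpr ⟨closure_flat' M _,
      hF₁F.trans (hclsub hSpw).2, hclH.trans hHF₂⟩, (hclsub hSpw).2, hclH⟩
  have key := Finset.sum_fiberwise_of_maps_to hmaps (fun S => (-1 : ℤ) ^ S.card)
  have hfib : ∀ G ∈ 𝓐.filter (fun G => F ⊆ G ∧ G ⊆ H),
      s.filter (fun (S : Finset α) => M.closure (F ∪ ↑S) = G)
        = DF.powerset.filter (fun (S : Finset α) => M.closure (F ∪ ↑S) = G) := by
    intro G hG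
    have hGH : G ⊆ H := (Finset.mem_filter.mp hG).2.2
    rw [hs, Finset.filter_filter]
    apply Finset.filter_congr
    intro S hSpw
    exact ⟨fun h => h.2, fun h => ⟨(hclsub hSpw).1.trans (by rw [h]; exact hGH), h⟩⟩
  have step1 : ∑ G ∈ 𝓐.filter (fun G => F ⊆ G ∧ G ⊆ H), mob M hF₂fin F G
      = ∑ S ∈ s, (-1 : ℤ) ^ S.card := by
    rw [← key]
    refine Finset.sum_congr rfl fun G hG => ?_
    simp only [mob]
    rw [← hDF, ← hfib G hG]
  have hsEq : s = (DF.filter (fun x => x ∈ H)).powerset := by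
    ext S
    simp only [hs, Finset.mem_filter, Finset.mem_powerset]
    constructor
    · rintro ⟨h1, h2⟩ x hx
      exact Finset.mem_filter.mpr ⟨h1 hx, h2 hx⟩
    · intro h
      exact ⟨fun x hx => (Finset.mem_filter.mp (h hx)).1,
        fun x hx => (Finset.mem_filter.mp (h (Finset.mem_coe.mp hx))).2⟩
  have hcond : (DF.filter (fun x => x ∈ H) = ∅) ↔ F = H := by
    rw [Finset.filter_eq_empty_iff]
    constructor
    · intro h
      refine hFH.antisymm fun x hxH => ?_
      by_contra hxF
      exact h (hmemDF.mpr ⟨hHF₂ hxH, hxF⟩) hxH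
    · rintro rfl
      intro x hx
      exact (hmemDF.mp hx).2
  rw [step1, hsEq, Finset.sum_powerset_neg_one_pow_card, if_congr hcond rfl rfl]

lemma lemB (M : Matroid α) {F₁ F₂ : Set α} (h₂ : M.IsFlat F₂) (hF₂fin : F₂.Finite)
    (𝓐 : Finset (Set α))
    (h𝓐 : ∀ G : Set α, G ∈ 𝓐 ↔ M.IsFlat G ∧ F₁ ⊆ G ∧ G ⊆ F₂)
    (h₁ : F₁ ∈ 𝓐) :
    ∀ (k : ℕ) (H : Set α), H ∈ 𝓐 → (H \ F₁).ncard = k →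
      ∑ F ∈ 𝓐.filter (fun F => F ⊆ H), mob M hF₂fin F H = if F₁ = H then 1 else 0 := by
  classical
  intro k
  induction k using Nat.strong_induction_on with
  | _ k IH =>
  intro H hH hk
  obtain ⟨hHflat, hF₁H, hHF₂⟩ := (h𝓐 H).mp hH
  by_cases hHeq : F₁ = H
  · subst hHeq
    have hfilter : 𝓐.filter (fun F => F ⊆ F₁) = {F₁} := by
      ext G
      simp only [Finset.mem_filter, Finset.mem_singleton]
      exact ⟨fun ⟨hG, hGF₁⟩ => hGF₁.antisymm ((h𝓐 G).mp hG).2.1,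
        fun h => by rw [h]; exact ⟨h₁, subset_refl _⟩⟩
    rw [hfilter, Finset.sum_singleton, if_pos rfl]
    have hsingle : ((hF₂fin.diff (t := F₁)).toFinset.powerset.filter
        (fun (S : Finset α) => M.closure (F₁ ∪ ↑S) = F₁)) = {∅} := by
      ext S
      simp only [Finset.mem_filter, Finset.mem_powerset, Finset.mem_singleton]
      constructor
      · rintro ⟨hSpw, hcl⟩
        rw [Finset.eq_empty_iff_forall_notMem]
        intro x hx
        have hxF₁ : x ∈ F₁ := by
          have hsub : (↑S : Set α) ⊆ M.closure (F₁ ∪ ↑S) := by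
            have hSF₂ : (↑S : Set α) ⊆ F₂ := fun y hy => by
              have := hSpw hy
              simp at this
              exact this.1
            exact Set.subset_union_right.trans (M.subset_closure (F₁ ∪ ↑S)
              (Set.union_subset (hF₁H.trans (hHF₂.trans h₂.subset_ground))
                (hSF₂.trans h₂.subset_ground)))
          rw [hcl] at hsub
          exact hsub hx
        have := hSpw hx
        simp at this
        exact this.2 hxF₁
      · rintro rfl
        refine ⟨Finset.empty_subset _, ?_⟩
        simp only [Finset.coe_empty, Set.union_empty]
        exact hHflat.closure
    simp only [mob]
    rw [hsingle, Finset.sum_singleton]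
    simp
  · set AH := 𝓐.filter (fun F => F ⊆ H) with hAH
    have hHA : H ∈ AH := Finset.mem_filter.mpr ⟨hH, subset_refl _⟩
    have e1 : (1 : ℤ) = ∑ F ∈ AH, if F = H then 1 else 0 := by
      rw [Finset.sum_ite_eq' AH H (fun _ => (1 : ℤ))]
      simp [hHA]
    have e2 : ∀ F ∈ AH, (if F = H then (1 : ℤ) else 0)
        = ∑ G ∈ AH.filter (fun G => F ⊆ G), mob M hF₂fin F G := by
      intro F hF'
      obtain ⟨hF𝓐, hFH⟩ := Finset.mem_filter.mp hF'
      rw [← lemA M h₂ hF₂fin 𝓐 h𝓐 hF𝓐 hH hFH]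
      congr 1
      rw [hAH, Finset.filter_filter]
      apply Finset.filter_congr
      intro G _
      exact ⟨fun ⟨a, b⟩ => ⟨b, a⟩, fun ⟨a, b⟩ => ⟨b, a⟩⟩
    have e3 : ∑ F ∈ AH, ∑ G ∈ AH.filter (fun G => F ⊆ G), mob M hF₂fin F G
        = ∑ G ∈ AH, ∑ F ∈ AH.filter (fun F => F ⊆ G), mob M hF₂fin F G := by
      simp_rw [Finset.sum_filter]
      exact Finset.sum_comm
    have e4 : ∀ G ∈ AH, AH.filter (fun F => F ⊆ G) = 𝓐.filter (fun F => F ⊆ G) := by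
      intro G hG
      have hGH : G ⊆ H := (Finset.mem_filter.mp hG).2
      rw [hAH, Finset.filter_filter]
      apply Finset.filter_congr
      intro F _
      exact ⟨And.right, fun h => ⟨h.trans hGH, h⟩⟩
    have e5 : ∀ G ∈ AH.erase H,
        ∑ F ∈ 𝓐.filter (fun F => F ⊆ G), mob M hF₂fin F G = if F₁ = G then 1 else 0 := by
      intro G hG
      obtain ⟨hGne, hGAH⟩ := Finset.mem_erase.mp hG
      obtain ⟨hG𝓐, hGH⟩ := Finset.mem_filter.mp hGAH
      have hF₁G : F₁ ⊆ G := ((h𝓐 G).mp hG𝓐).2.1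
      have hlt : (G \ F₁).ncard < k := by
        rw [← hk]
        refine Set.ncard_lt_ncard ?_ ((hF₂fin.subset hHF₂).diff)
        refine ⟨Set.diff_subset_diff_left hGH, fun habs => hGne ?_⟩
        have heq : G \ F₁ = H \ F₁ := (Set.diff_subset_diff_left hGH).antisymm habs
        have : F₁ ∪ (G \ F₁) = F₁ ∪ (H \ F₁) := by rw [heq]
        rwa [Set.union_diff_cancel hF₁G, Set.union_diff_cancel hF₁H] at this
      exact IH _ hlt G hG𝓐 rfl
    have e6 : ∑ G ∈ AH.erase H, (∑ F ∈ 𝓐.filter (fun F => F ⊆ G), mob M hF₂fin F G)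
        = 1 := by
      rw [Finset.sum_congr rfl e5]
      rw [Finset.sum_ite_eq (AH.erase H) F₁ (fun _ => (1 : ℤ))]
      have hmem : F₁ ∈ AH.erase H :=
        Finset.mem_erase.mpr ⟨hHeq, Finset.mem_filter.mpr ⟨h₁, hF₁H⟩⟩
      rw [if_pos hmem]
    have e7 : ∑ G ∈ AH.erase H, (∑ F ∈ AH.filter (fun F => F ⊆ G), mob M hF₂fin F G)
        + ∑ F ∈ AH.filter (fun F => F ⊆ H), mob M hF₂fin F H
        = ∑ G ∈ AH, ∑ F ∈ AH.filter (fun F => F ⊆ G), mob M hF₂fin F G :=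
      Finset.sum_erase_add _ _ hHA
    have e8 : ∑ G ∈ AH.erase H, (∑ F ∈ AH.filter (fun F => F ⊆ G), mob M hF₂fin F G)
        = 1 := by
      rw [← e6]
      refine Finset.sum_congr rfl fun G hG => ?_
      rw [e4 G (Finset.mem_erase.mp hG).2]
    have e9 : ∑ G ∈ AH, ∑ F ∈ AH.filter (fun F => F ⊆ G), mob M hF₂fin F G = 1 := by
      rw [← e3, ← Finset.sum_congr rfl e2, ← e1]
    have e10 : ∑ F ∈ AH.filter (fun F => F ⊆ H), mob M hF₂fin F H = 0 := by omega
    rw [if_neg hHeq, ← e10, e4 H hHA]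

theorem qAnalogue_eq_sum_redCharPoly_minor (M : Matroid α) (hE : M.E.Finite)
    {F₁ F₂ : Set α} (h₁ : M.IsFlat F₁) (h₂ : M.IsFlat F₂) (h₁₂ : F₁ ⊆ F₂) :
    qAnalogue (rk M F₂ - rk M F₁) =
      ∑ᶠ F ∈ {F : Set α | M.IsFlat F ∧ F₁ ⊆ F ∧ F ⊂ F₂},
        redCharPoly (contract (M.restrict F₂) F) := by
  classical
  have h₂E : F₂ ⊆ M.E := h₂.subset_ground
  have hF₂fin : F₂.Finite := hE.subset h₂E
  have hAfin : {G : Set α | M.IsFlat G ∧ F₁ ⊆ G ∧ G ⊆ F₂}.Finite :=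
    hF₂fin.finite_subsets.subset fun G hG => hG.2.2
  set 𝓐 : Finset (Set α) := hAfin.toFinset with h𝓐def
  have h𝓐 : ∀ G : Set α, G ∈ 𝓐 ↔ M.IsFlat G ∧ F₁ ⊆ G ∧ G ⊆ F₂ := by
    intro G
    rw [h𝓐def, Set.Finite.mem_toFinset]
    rfl
  have hF₁A : F₁ ∈ 𝓐 := (h𝓐 _).mpr ⟨h₁, subset_refl _, h₁₂⟩
  have hF₂A : F₂ ∈ 𝓐 := (h𝓐 _).mpr ⟨h₂, h₁₂, subset_refl _⟩
  set g : Set α → Polynomial ℤ := fun G => qAnalogue (rk M F₂ - rk M G) with hg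
  have hinner : ∀ F ∈ 𝓐,
      ∑ S ∈ ((hF₂fin.diff (t := F)).toFinset).powerset,
          (-1 : ℤ) ^ S.card • g (M.closure (F ∪ ↑S))
        = ∑ G ∈ 𝓐.filter (fun G => F ⊆ G), mob M hF₂fin F G • g G := by
    intro F hF
    obtain ⟨hFflat, hF₁F, hFF₂⟩ := (h𝓐 F).mp hF
    have hclsub : ∀ {S : Finset α}, S ∈ ((hF₂fin.diff (t := F)).toFinset).powerset →
        (↑S : Set α) ⊆ M.closure (F ∪ ↑S) ∧ F ⊆ M.closure (F ∪ ↑S) ∧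
          M.closure (F ∪ ↑S) ⊆ F₂ := by
      intro S hS
      have hSF₂ : (↑S : Set α) ⊆ F₂ := by
        intro x hx
        have := Finset.mem_powerset.mp hS hx
        simp at this
        exact this.1
      have hsub := M.subset_closure (F ∪ ↑S)
        (Set.union_subset (hFF₂.trans h₂E) (hSF₂.trans h₂E))
      refine ⟨Set.subset_union_right.trans hsub, Set.subset_union_left.trans hsub, ?_⟩
      have := M.closure_subset_closure (Set.union_subset hFF₂ hSF₂)
      rwa [h₂.closure] at this
    have hmaps : ∀ S ∈ ((hF₂fin.diff (t := F)).toFinset).powerset,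
        M.closure (F ∪ ↑S) ∈ 𝓐.filter (fun G => F ⊆ G) := by
      intro S hS
      exact Finset.mem_filter.mpr ⟨(h𝓐 _).mpr ⟨closure_flat' M _,
        hF₁F.trans (hclsub hS).2.1, (hclsub hS).2.2⟩, (hclsub hS).2.1⟩
    have key := Finset.sum_fiberwise_of_maps_to hmaps
      (fun S : Finset α => (-1 : ℤ) ^ S.card • g (M.closure (F ∪ ↑S)))
    rw [← key]
    refine Finset.sum_congr rfl fun G hG => ?_
    simp only [mob]
    rw [Finset.sum_smul]
    refine Finset.sum_congr rfl fun S hS => ?_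
    rw [(Finset.mem_filter.mp hS).2]
  have hexp : ∀ F ∈ 𝓐, redCharPoly (contract (M.restrict F₂) F)
      = ∑ S ∈ ((hF₂fin.diff (t := F)).toFinset).powerset,
          (-1 : ℤ) ^ S.card • g (M.closure (F ∪ ↑S)) := by
    intro F hF
    obtain ⟨hFflat, hF₁F, hFF₂⟩ := (h𝓐 F).mp hF
    rw [redCharPoly_contract_eq M hE h₂E hFF₂ (hF₂fin.diff (t := F))]
  have hswap : ∑ F ∈ 𝓐, ∑ G ∈ 𝓐.filter (fun G => F ⊆ G), mob M hF₂fin F G • g G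
      = g F₁ := by
    calc ∑ F ∈ 𝓐, ∑ G ∈ 𝓐.filter (fun G => F ⊆ G), mob M hF₂fin F G • g G
        = ∑ F ∈ 𝓐, ∑ G ∈ 𝓐, if F ⊆ G then mob M hF₂fin F G • g G else 0 := by
          simp_rw [Finset.sum_filter]
      _ = ∑ G ∈ 𝓐, ∑ F ∈ 𝓐, if F ⊆ G then mob M hF₂fin F G • g G else 0 :=
          Finset.sum_comm
      _ = ∑ G ∈ 𝓐, (∑ F ∈ 𝓐.filter (fun F => F ⊆ G), mob M hF₂fin F G) • g G := by
          refine Finset.sum_congr rfl fun G _ => ?_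
          rw [Finset.sum_smul, Finset.sum_filter]
      _ = ∑ G ∈ 𝓐, (if F₁ = G then (1 : ℤ) else 0) • g G := by
          refine Finset.sum_congr rfl fun G hG => ?_
          rw [lemB M h₂ hF₂fin 𝓐 h𝓐 hF₁A _ G hG rfl]
      _ = g F₁ := by
          have hrw : ∀ G ∈ 𝓐, (if F₁ = G then (1 : ℤ) else 0) • g G
              = if F₁ = G then g G else 0 := by
            intro G _
            split_ifs <;> simp
          rw [Finset.sum_congr rfl hrw, Finset.sum_ite_eq 𝓐 F₁ g, if_pos hF₁A]
  have hF₂term : ∑ S ∈ ((hF₂fin.diff (t := F₂)).toFinset).powerset,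
      (-1 : ℤ) ^ S.card • g (M.closure (F₂ ∪ ↑S)) = 0 := by
    have hD : (hF₂fin.diff (t := F₂)).toFinset = (∅ : Finset α) := by
      ext x
      simp
    rw [hD, Finset.powerset_empty, Finset.sum_singleton]
    simp [hg, h₂.closure, qAnalogue_zero]
  have hSfin : {F : Set α | M.IsFlat F ∧ F₁ ⊆ F ∧ F ⊂ F₂}.Finite :=
    hAfin.subset fun F hF => ⟨hF.1, hF.2.1, hF.2.2.subset⟩
  rw [finsum_mem_eq_finite_toFinset_sum _ hSfin]
  have htf : hSfin.toFinset = 𝓐.erase F₂ := by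
    ext F
    simp only [Set.Finite.mem_toFinset, Finset.mem_erase, Set.mem_setOf_eq]
    constructor
    · rintro ⟨hf, hsub1, hss⟩
      exact ⟨hss.ne, (h𝓐 F).mpr ⟨hf, hsub1, hss.subset⟩⟩
    · rintro ⟨hne, hmem⟩
      obtain ⟨hf, hsub1, hsub⟩ := (h𝓐 F).mp hmem
      exact ⟨hf, hsub1, hsub.ssubset_of_ne hne⟩
  rw [htf]
  have herase : ∑ F ∈ 𝓐.erase F₂, redCharPoly (contract (M.restrict F₂) F)
      + redCharPoly (contract (M.restrict F₂) F₂)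
      = ∑ F ∈ 𝓐, redCharPoly (contract (M.restrict F₂) F) :=
    Finset.sum_erase_add 𝓐 _ hF₂A
  have hA : ∑ F ∈ 𝓐, redCharPoly (contract (M.restrict F₂) F) = g F₁ := by
    rw [Finset.sum_congr rfl hexp, Finset.sum_congr rfl hinner, hswap]
  have hfF₂ : redCharPoly (contract (M.restrict F₂) F₂) = 0 := by
    rw [hexp F₂ hF₂A, hF₂term]
  rw [hfF₂, add_zero] at herase
  rw [herase, hA]


end MatroidZeta
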